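/- arXiv:1702.08247 — 6 statements merged into one kernel-verified Lean document; each statement's English description precedes it below -/
import Mathlib

section
/- Let u_1,...,u_m and v_1,...,v_m be vectors in ℝ^n, and let p_1,...,p_m ∈ [0,1]. Then the expectation over independent Bernoulli variables π_1,...,π_m with π_i ~ Bern(p_i) of det(Σ_{i=1}^m π_i u_i v_iᵀ) equals det(Σ_{i=1}^m p_i u_i v_iᵀ). Concretely: Σ_{S ⊆ {1,...,m}} (Π_{i∈S} p_i)(Π_{i∉S} (1−p_i)) · det(Σ_{i∈S} u_i v_iᵀ) = det(Σ_{i=1}^m p_i u_i v_iᵀ). -/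
open Finset Matrix

/-- Auxiliary: adding multiples of `v` to some rows does not change the determinant
of a matrix whose `j`-th row is already `v`. -/
private lemma det_aux1 {n : ℕ} (A : Matrix (Fin n) (Fin n) ℝ) (w v : Fin n → ℝ)
    (s : Finset (Fin n)) (j : Fin n) :
    j ∉ s →
    ((Matrix.of (s.piecewise (fun i => A i + w i • v) A)).updateRow j v).det
      = (A.updateRow j v).det := by
  induction s using Finset.induction_on with
  | empty =>
    intro _
    congr 1
  | @insert k s hk ih =>
    intro hj
    have hjk : j ≠ k := by rintro rfl; exact hj (Finset.mem_insert_self _ _)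
    have hjs : j ∉ s := fun h => hj (Finset.mem_insert_of_mem h)
    have h1 : (Matrix.of ((insert k s).piecewise (fun i => A i + w i • v) A)).updateRow j v
        = ((Matrix.of (s.piecewise (fun i => A i + w i • v) A)).updateRow j v).updateRow
            k (A k + w k • v) := by
      ext i x
      rcases eq_or_ne i k with rfl | hik
      · rw [Matrix.updateRow_self, Matrix.updateRow_ne hjk.symm, Matrix.of_apply]
        exact congrFun (Finset.piecewise_eq_of_mem _ _ _ (Finset.mem_insert_self _ _)) x
      · rw [Matrix.updateRow_ne hik]
        rcases eq_or_ne i j with rfl | hij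
        · simp
        · rw [Matrix.updateRow_ne hij, Matrix.updateRow_ne hij, Matrix.of_apply,
            Matrix.of_apply]
          rcases Finset.decidableMem i s with h | h
          · exact congrFun ((Finset.piecewise_eq_of_notMem _ _ _
              (by simp [hik, h] : i ∉ insert k s)).trans
              (Finset.piecewise_eq_of_notMem _ _ _ h).symm) x
          · exact congrFun ((Finset.piecewise_eq_of_mem _ _ _
              (Finset.mem_insert_of_mem h)).trans
              (Finset.piecewise_eq_of_mem _ _ _ h).symm) x
    rw [h1, Matrix.det_updateRow_add, Matrix.det_updateRow_smul]
    have hz : (((Matrix.of (s.piecewise (fun i => A i + w i • v) A)).updateRow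
        j v).updateRow k v).det = 0 := by
      apply Matrix.det_zero_of_row_eq hjk
      rw [Matrix.updateRow_self, Matrix.updateRow_ne hjk, Matrix.updateRow_self]
    rw [hz, mul_zero, add_zero]
    have h2 : (((Matrix.of (s.piecewise (fun i => A i + w i • v) A)).updateRow
        j v).updateRow k (A k))
        = (Matrix.of (s.piecewise (fun i => A i + w i • v) A)).updateRow j v := by
      ext i x
      rcases eq_or_ne i k with rfl | hik
      · rw [Matrix.updateRow_self, Matrix.updateRow_ne hjk.symm, Matrix.of_apply]
        exact congrFun (Finset.piecewise_eq_of_notMem _ _ _ hk).symm x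
      · rw [Matrix.updateRow_ne hik]
    rw [h2, ih hjs]

/-- Auxiliary: row-by-row expansion of the determinant of a rank-one perturbation. -/
private lemma det_aux2 {n : ℕ} (A : Matrix (Fin n) (Fin n) ℝ) (w v : Fin n → ℝ)
    (s : Finset (Fin n)) :
    (Matrix.of (s.piecewise (fun i => A i + w i • v) A)).det
      = A.det + ∑ i ∈ s, w i * (A.updateRow i v).det := by
  induction s using Finset.induction_on with
  | empty => simp; congr 1
  | @insert k s hk ih =>
    have h1 : Matrix.of ((insert k s).piecewise (fun i => A i + w i • v) A)
        = (Matrix.of (s.piecewise (fun i => A i + w i • v) A)).updateRow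
            k (A k + w k • v) := by
      ext i x
      rcases eq_or_ne i k with rfl | hik
      · rw [Matrix.updateRow_self, Matrix.of_apply]
        exact congrFun (Finset.piecewise_eq_of_mem _ _ _ (Finset.mem_insert_self _ _)) x
      · rw [Matrix.updateRow_ne hik, Matrix.of_apply, Matrix.of_apply]
        rcases Finset.decidableMem i s with h | h
        · exact congrFun ((Finset.piecewise_eq_of_notMem _ _ _
            (by simp [hik, h] : i ∉ insert k s)).trans
            (Finset.piecewise_eq_of_notMem _ _ _ h).symm) x
        · exact congrFun ((Finset.piecewise_eq_of_mem _ _ _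
            (Finset.mem_insert_of_mem h)).trans
            (Finset.piecewise_eq_of_mem _ _ _ h).symm) x
    have h2 : (Matrix.of (s.piecewise (fun i => A i + w i • v) A)).updateRow k (A k)
        = Matrix.of (s.piecewise (fun i => A i + w i • v) A) := by
      ext i x
      rcases eq_or_ne i k with rfl | hik
      · rw [Matrix.updateRow_self, Matrix.of_apply]
        exact congrFun (Finset.piecewise_eq_of_notMem _ _ _ hk).symm x
      · rw [Matrix.updateRow_ne hik]
    rw [h1, Matrix.det_updateRow_add, Matrix.det_updateRow_smul, h2, ih,
      det_aux1 A w v s k hk, Finset.sum_insert hk]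
    ring

/-- Determinant of a rank-one perturbation expands linearly in the scaling. -/
private lemma det_add_smul_vecMulVec {n : ℕ} (A : Matrix (Fin n) (Fin n) ℝ)
    (u v : Fin n → ℝ) (a : ℝ) :
    (A + a • Matrix.vecMulVec u v).det
      = A.det + a * ∑ i, u i * (A.updateRow i v).det := by
  have key : A + a • Matrix.vecMulVec u v
      = Matrix.of (Finset.univ.piecewise (fun i => A i + (a * u i) • v) A) := by
    ext i x
    simp [Matrix.vecMulVec_apply, Finset.piecewise_univ]
    refine Eq.trans ?_ (congrFun (Finset.piecewise_eq_of_mem Finset.univ (fun i => A i + (a * u i) • v) A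
      (Finset.mem_univ i)) x).symm
    show _ = A i x + (a * u i) * v x
    ring
  rw [key, det_aux2, Finset.mul_sum]
  congr 1
  exact Finset.sum_congr rfl fun i _ => by ring

private lemma det_affine {n : ℕ} (A : Matrix (Fin n) (Fin n) ℝ)
    (u v : Fin n → ℝ) (a : ℝ) :
    (A + a • Matrix.vecMulVec u v).det
      = A.det + a * ((A + Matrix.vecMulVec u v).det - A.det) := by
  have h1 := det_add_smul_vecMulVec A u v a
  have h2 := det_add_smul_vecMulVec A u v 1
  rw [one_smul] at h2
  rw [h1, h2]
  ring

/-- Multilinear-extension identity for coordinatewise affine functions. -/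
private lemma bern_expand {m : ℕ} (p : Fin m → ℝ) (F : (Fin m → ℝ) → ℝ)
    (hF : ∀ (t : Fin m → ℝ) (i : Fin m) (a : ℝ),
      F (Function.update t i a)
        = F (Function.update t i 0)
          + a * (F (Function.update t i 1) - F (Function.update t i 0)))
    (s : Finset (Fin m)) :
    ∑ S ∈ s.powerset, (∏ i ∈ S, p i) * (∏ i ∈ s \ S, (1 - p i)) *
        F (fun i => if i ∈ S then 1 else if i ∈ s then 0 else p i) = F p := by
  induction s using Finset.induction_on with
  | empty =>
    simp only [Finset.powerset_empty, Finset.sum_singleton, Finset.prod_empty,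
      Finset.empty_sdiff, Finset.notMem_empty, if_false, one_mul]
  | @insert a s ha ih =>
    rw [Finset.sum_powerset_insert ha, ← ih, ← Finset.sum_add_distrib]
    refine Finset.sum_congr rfl fun S hS => ?_
    have haS : a ∉ S := fun h => ha (Finset.mem_powerset.mp hS h)
    set h : Fin m → ℝ := fun i => if i ∈ S then 1 else if i ∈ s then 0 else p i with hh
    have hg0 : (fun i => if i ∈ S then 1 else if i ∈ insert a s then 0 else p i)
        = Function.update h a 0 := by
      funext i
      rcases eq_or_ne i a with rfl | hia
      · simp [haS, ha, hh]
      · simp [Function.update_of_ne hia, hh, hia]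
    have hg1 : (fun i => if i ∈ insert a S then 1 else if i ∈ insert a s then 0 else p i)
        = Function.update h a 1 := by
      funext i
      rcases eq_or_ne i a with rfl | hia
      · simp
      · simp [Function.update_of_ne hia, hh, hia]
    have hhp : h = Function.update h a (p a) := by
      funext i
      rcases eq_or_ne i a with rfl | hia
      · simp [hh, haS, ha]
      · simp [Function.update_of_ne hia]
    have hd1 : insert a s \ S = insert a (s \ S) := Finset.insert_sdiff_of_notMem s haS
    have hd2 : insert a s \ insert a S = s \ S := by
      rw [Finset.insert_sdiff_insert, Finset.sdiff_insert_of_notMem ha]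
    have has' : a ∉ s \ S := fun h => ha (Finset.mem_sdiff.mp h).1
    rw [hg0, hg1, hd1, hd2, Finset.prod_insert has', Finset.prod_insert haS]
    nth_rewrite 3 [hhp]
    rw [hF h a (p a)]
    ring

/-- The expectation over independent Bernoulli variables `π i ~ Bern (p i)` of
`det (∑ i, π i • u i (v i)ᵀ)` equals `det (∑ i, p i • u i (v i)ᵀ)`. -/
theorem expected_det_rank_one_sum
    (m n : ℕ) (u v : Fin m → Fin n → ℝ) (p : Fin m → ℝ)
    (hp : ∀ i, p i ∈ Set.Icc (0 : ℝ) 1) :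
    ∑ S ∈ Finset.univ.powerset,
        (∏ i ∈ S, p i) * (∏ i ∈ Sᶜ, (1 - p i)) *
          (∑ i ∈ S, Matrix.vecMulVec (u i) (v i)).det
      = (∑ i : Fin m, p i • Matrix.vecMulVec (u i) (v i)).det := by
  set F : (Fin m → ℝ) → ℝ :=
    fun t => (∑ i : Fin m, t i • Matrix.vecMulVec (u i) (v i)).det with hFdef
  have hF : ∀ (t : Fin m → ℝ) (i : Fin m) (a : ℝ),
      F (Function.update t i a)
        = F (Function.update t i 0)
          + a * (F (Function.update t i 1) - F (Function.update t i 0)) := by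
    intro t i a
    have hsum : ∀ b : ℝ, ∑ i' : Fin m, Function.update t i b i' •
        Matrix.vecMulVec (u i') (v i')
        = (∑ i' ∈ Finset.univ.erase i, t i' • Matrix.vecMulVec (u i') (v i'))
          + b • Matrix.vecMulVec (u i) (v i) := by
      intro b
      rw [← Finset.add_sum_erase _ _ (Finset.mem_univ i), Function.update_self, add_comm]
      congr 1
      exact Finset.sum_congr rfl fun j hj =>
        by rw [Function.update_of_ne (Finset.ne_of_mem_erase hj)]
    simp only [hFdef, hsum]
    rw [det_affine, det_affine _ _ _ (0 : ℝ), det_affine _ _ _ (1 : ℝ)]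
    ring
  have key := bern_expand p F hF Finset.univ
  rw [show (∑ i : Fin m, p i • Matrix.vecMulVec (u i) (v i)).det = F p from rfl, ← key]
  refine Finset.sum_congr rfl fun S _ => ?_
  rw [Finset.compl_eq_univ_sdiff]
  congr 1
  show (∑ i ∈ S, Matrix.vecMulVec (u i) (v i)).det
    = (∑ i : Fin m, (if i ∈ S then (1 : ℝ) else if i ∈ Finset.univ then 0 else p i) •
        Matrix.vecMulVec (u i) (v i)).det
  congr 1
  have hpt : ∀ i : Fin m, (if i ∈ S then (1 : ℝ) else if i ∈ Finset.univ then 0 else p i) •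
      Matrix.vecMulVec (u i) (v i)
      = if i ∈ S then Matrix.vecMulVec (u i) (v i) else 0 := by
    intro i
    by_cases hi : i ∈ S <;> simp [hi]
  calc ∑ i ∈ S, Matrix.vecMulVec (u i) (v i)
      = ∑ i ∈ Finset.univ ∩ S, Matrix.vecMulVec (u i) (v i) := by rw [Finset.univ_inter]
    _ = ∑ i : Fin m, if i ∈ S then Matrix.vecMulVec (u i) (v i) else 0 :=
        (Finset.sum_ite_mem _ _ _).symm
    _ = ∑ i : Fin m, (if i ∈ S then (1 : ℝ) else if i ∈ Finset.univ then 0 else p i) •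
          Matrix.vecMulVec (u i) (v i) := Finset.sum_congr rfl fun i _ => (hpt i).symm
end

section
/- Let U and V be n×m real matrices with columns u_1,...,u_m and v_1,...,v_m respectively, and let p_1,...,p_m ∈ [0,1]. Let P = diag(p_1,...,p_m). Then the expectation over independent Bernoulli variables π_1,...,π_m with π_i ~ Bern(p_i) of det(U Π Vᵀ), where Π = diag(π_1,...,π_m), equals det(U P Vᵀ). Concretely: Σ_{S ⊆ {1,...,m}} (Π_{i∈S} p_i)(Π_{i∉S} (1−p_i)) · det(U D_S Vᵀ) = det(U P Vᵀ), where D_S is the diagonal 0/1 matrix with ones exactly at the indices in S. -/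
open Matrix

/-- Row expansion (Cauchy–Binet style): `det (U * diagonal π * Vᵀ)` as a sum over
functions `r : Fin n → Fin m`. -/
private lemma expand_det {m n : ℕ} (U V : Matrix (Fin n) (Fin m) ℝ) (π : Fin m → ℝ) :
    (U * Matrix.diagonal π * Vᵀ).det
      = ∑ r : Fin n → Fin m, (∏ j, U j (r j)) * (∏ j, π (r j)) *
          (Matrix.of fun j k => V k (r j)).det := by
  have hM : (U * Matrix.diagonal π * Vᵀ)
      = Matrix.of fun j => ∑ i, (U j i * π i) • (fun k => V k i) := by
    ext j k
    simp [Matrix.mul_apply, Matrix.diagonal_apply, ite_mul, mul_ite, mul_assoc]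
  rw [hM]
  have hdet : (Matrix.of fun j => ∑ i, (U j i * π i) • (fun k => V k i)).det
      = ∑ r : Fin n → Fin m,
          (Matrix.of fun j => (U j (r j) * π (r j)) • (fun k => V k (r j))).det := by
    exact (Matrix.detRowAlternating.toMultilinearMap.map_sum
      (fun j i => (U j i * π i) • (fun k => V k i)))
  rw [hdet]
  refine Finset.sum_congr rfl fun r _ => ?_
  have : (Matrix.of fun j => (U j (r j) * π (r j)) • (fun k => V k (r j)))
      = Matrix.of fun j k => (U j (r j) * π (r j)) * V k (r j) := by
    ext j k; simp
  rw [this, ← Finset.prod_mul_distrib]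
  exact Matrix.det_mul_column _ (Matrix.of fun j k => V k (r j))

/-- The key combinatorial identity: the Bernoulli weights sum over supersets of `T`
to `∏ i ∈ T, p i`. -/
private lemma sum_weights {m : ℕ} (p : Fin m → ℝ) (T : Finset (Fin m)) :
    ∑ S ∈ Finset.univ.powerset,
        (∏ i ∈ S, p i) * (∏ i ∈ Sᶜ, (1 - p i)) * (if T ⊆ S then (1:ℝ) else 0)
      = ∏ i ∈ T, p i := by
  have key : ∀ S : Finset (Fin m),
      (∏ i ∈ S, p i) * (∏ i ∈ Sᶜ, (1 - p i)) * (if T ⊆ S then (1:ℝ) else 0)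
        = (∏ i ∈ S, p i) *
            ∏ i ∈ Finset.univ \ S, (if i ∈ T then 0 else 1 - p i) := by
    intro S
    by_cases hTS : T ⊆ S
    · rw [if_pos hTS, mul_one, Finset.compl_eq_univ_sdiff]
      refine congrArg _ (Finset.prod_congr rfl fun i hi => ?_)
      rw [if_neg (fun hiT => (Finset.mem_sdiff.mp hi).2 (hTS hiT))]
    · rw [if_neg hTS, mul_zero]
      obtain ⟨i, hiT, hiS⟩ := Finset.not_subset.mp hTS
      have hz : (∏ i ∈ Finset.univ \ S, (if i ∈ T then (0:ℝ) else 1 - p i)) = 0 :=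
        Finset.prod_eq_zero (Finset.mem_sdiff.mpr ⟨Finset.mem_univ i, hiS⟩) (if_pos hiT)
      rw [hz, mul_zero]
  rw [Finset.sum_congr rfl fun S _ => key S, ← Finset.prod_add]
  have : ∀ i : Fin m, p i + (if i ∈ T then 0 else 1 - p i)
      = (if i ∈ T then p i else 1) := by
    intro i; by_cases h : i ∈ T <;> simp [h]
  rw [Finset.prod_congr rfl fun i _ => this i, Finset.prod_ite_mem,
    Finset.univ_inter]

/-- The expectation over independent Bernoulli variables `π i ~ Bern (p i)` of
`det (U Π Vᵀ)`, with `Π = diag (π 1, …, π m)`, equals `det (U P Vᵀ)` where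
`P = diag (p 1, …, p m)`. -/
theorem expected_det_UPiV
    (m n : ℕ) (U V : Matrix (Fin n) (Fin m) ℝ) (p : Fin m → ℝ)
    (hp : ∀ i, p i ∈ Set.Icc (0 : ℝ) 1) :
    ∑ S ∈ Finset.univ.powerset,
        (∏ i ∈ S, p i) * (∏ i ∈ Sᶜ, (1 - p i)) *
          (U * Matrix.diagonal (fun i => if i ∈ S then (1 : ℝ) else 0) * Vᵀ).det
      = (U * Matrix.diagonal p * Vᵀ).det := by
  have step1 : ∑ S ∈ Finset.univ.powerset,
        (∏ i ∈ S, p i) * (∏ i ∈ Sᶜ, (1 - p i)) *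
          (U * Matrix.diagonal (fun i => if i ∈ S then (1 : ℝ) else 0) * Vᵀ).det
      = ∑ r : Fin n → Fin m, ∑ S ∈ Finset.univ.powerset,
          (∏ i ∈ S, p i) * (∏ i ∈ Sᶜ, (1 - p i)) *
            ((∏ j, U j (r j)) * (∏ j, if r j ∈ S then (1:ℝ) else 0) *
              (Matrix.of fun j k => V k (r j)).det) := by
    rw [Finset.sum_comm]
    refine Finset.sum_congr rfl fun S _ => ?_
    rw [expand_det, Finset.mul_sum]
  rw [step1, expand_det U V p]
  refine Finset.sum_congr rfl fun r _ => ?_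
  -- replace the product of indicators by an indicator of the image being a subset
  have hind : ∀ S : Finset (Fin m),
      (∏ j, if r j ∈ S then (1:ℝ) else 0)
        = (if Finset.image r Finset.univ ⊆ S then (1:ℝ) else 0) := by
    intro S
    by_cases h : Finset.image r Finset.univ ⊆ S
    · rw [if_pos h]
      refine Finset.prod_eq_one fun j _ => ?_
      rw [if_pos (h (Finset.mem_image_of_mem r (Finset.mem_univ j)))]
    · rw [if_neg h]
      obtain ⟨i, hiI, hiS⟩ := Finset.not_subset.mp h
      obtain ⟨j, _, rfl⟩ := Finset.mem_image.mp hiI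
      exact Finset.prod_eq_zero (Finset.mem_univ j) (if_neg hiS)
  have hsum : ∑ S ∈ Finset.univ.powerset,
        (∏ i ∈ S, p i) * (∏ i ∈ Sᶜ, (1 - p i)) *
          ((∏ j, U j (r j)) * (∏ j, if r j ∈ S then (1:ℝ) else 0) *
            (Matrix.of fun j k => V k (r j)).det)
      = (∏ j, U j (r j)) * (Matrix.of fun j k => V k (r j)).det *
          (∏ i ∈ Finset.image r Finset.univ, p i) := by
    rw [← sum_weights p (Finset.image r Finset.univ), Finset.mul_sum]
    refine Finset.sum_congr rfl fun S _ => ?_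
    rw [hind S]; ring
  rw [hsum]
  by_cases hinj : Function.Injective r
  · rw [Finset.prod_image (fun i _ j _ h => hinj h)]; ring
  · obtain ⟨a, b, hab, hne⟩ := Function.not_injective_iff.mp hinj
    have hdet : (Matrix.of fun j k => V k (r j)).det = 0 := by
      refine Matrix.det_zero_of_row_eq hne ?_
      funext k; simp [hab]
    rw [hdet]; ring
end

section
/- Let R be a commutative ring, let u_1,...,u_m, v_1,...,v_m ∈ R^n, and let c_1,...,c_m ∈ R. Then det(Σ_{i=1}^m c_i u_i v_iᵀ) = Σ_{Q} (Π_{k∈Q} c_k) · det(Σ_{k∈Q} u_k v_kᵀ), where the sum ranges over all subsets Q of {1,...,m} with |Q| = n. -/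
open Finset Matrix

private theorem det_expand_aux
    (R : Type*) [CommRing R] (m n : ℕ) (u v : Fin m → Fin n → R)
    (s : Finset (Fin m)) (w : Fin m → R) :
    (∑ i ∈ s, w i • Matrix.vecMulVec (u i) (v i)).det
      = ∑ r ∈ Fintype.piFinset (fun _ : Fin n => s),
          (∏ j, w (r j) * u (r j) j) * (Matrix.of fun j k => v (r j) k).det := by
  have hM : (∑ i ∈ s, w i • Matrix.vecMulVec (u i) (v i))
      = Matrix.of fun j => ∑ i ∈ s, (w i * u i j) • v i := by
    ext j k
    simp [Matrix.sum_apply, Matrix.vecMulVec_apply, mul_assoc]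
  rw [hM]
  calc (Matrix.of fun j => ∑ i ∈ s, (w i * u i j) • v i : Matrix (Fin n) (Fin n) R).det
      = (Matrix.detRowAlternating (R := R) (n := Fin n)).toMultilinearMap
          (fun j => ∑ i ∈ s, (w i * u i j) • v i) := rfl
    _ = ∑ r ∈ Fintype.piFinset (fun _ : Fin n => s),
          (Matrix.detRowAlternating (R := R) (n := Fin n)).toMultilinearMap
            (fun j => (w (r j) * u (r j) j) • v (r j)) :=
        (Matrix.detRowAlternating (R := R) (n := Fin n)).toMultilinearMap.map_sum_finset
          (fun j i => (w i * u i j) • v i) (fun _ => s)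
    _ = _ := by
        refine Finset.sum_congr rfl fun r _ => ?_
        rw [(Matrix.detRowAlternating (R := R) (n := Fin n)).toMultilinearMap.map_smul_univ
            (fun j => w (r j) * u (r j) j) (fun j => v (r j))]
        rfl

/-- Cauchy–Binet expansion: over a commutative ring,
`det (∑ i, c i • u i (v i)ᵀ) = ∑_{Q, |Q| = n} (∏ k ∈ Q, c k) * det (∑ k ∈ Q, u k (v k)ᵀ)`. -/
theorem det_weighted_rank_one_sum_expansion
    (R : Type*) [CommRing R]
    (m n : ℕ) (u v : Fin m → Fin n → R) (c : Fin m → R) :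
    (∑ i : Fin m, c i • Matrix.vecMulVec (u i) (v i)).det
      = ∑ Q ∈ Finset.univ.powersetCard n,
          (∏ k ∈ Q, c k) * (∑ k ∈ Q, Matrix.vecMulVec (u k) (v k)).det := by
  classical
  -- non-injective r contribute 0
  have hzero : ∀ r : Fin n → Fin m, ¬ Function.Injective r →
      (Matrix.of fun j k => v (r j) k).det = 0 := by
    intro r hr
    unfold Function.Injective at hr
    push_neg at hr
    obtain ⟨j1, j2, heq, hne⟩ := hr
    exact Matrix.det_zero_of_row_eq hne (funext fun k => by simp [heq])
  -- LHS expansion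
  rw [show (∑ i : Fin m, c i • Matrix.vecMulVec (u i) (v i))
      = ∑ i ∈ Finset.univ, c i • Matrix.vecMulVec (u i) (v i) from rfl,
    det_expand_aux R m n u v Finset.univ c]
  -- restrict to injective r
  have hT : ∀ (s : Finset (Fin m)) (w : Fin m → R),
      ∑ r ∈ Fintype.piFinset (fun _ : Fin n => s),
          (∏ j, w (r j) * u (r j) j) * (Matrix.of fun j k => v (r j) k).det
      = ∑ r ∈ (Fintype.piFinset (fun _ : Fin n => s)).filter
            (fun r => Function.Injective r),
          (∏ j, w (r j) * u (r j) j) * (Matrix.of fun j k => v (r j) k).det := by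
    intro s w
    rw [Finset.sum_filter]
    refine Finset.sum_congr rfl fun r _ => ?_
    by_cases h : Function.Injective r
    · simp [h]
    · simp [h, hzero r h]
  rw [hT]
  -- fiber the injective functions by their image
  rw [← Finset.sum_fiberwise_of_maps_to
    (t := Finset.univ.powersetCard n)
    (g := fun r : Fin n → Fin m => Finset.image r Finset.univ)
    (fun r hr => by
      simp only [Finset.mem_filter, Fintype.mem_piFinset] at hr
      simp [Finset.mem_powersetCard, Finset.card_image_of_injective _ hr.2])]
  refine Finset.sum_congr rfl fun Q hQ => ?_
  rw [Finset.mem_powersetCard_univ] at hQ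
  -- RHS for this Q
  have : (∑ k ∈ Q, Matrix.vecMulVec (u k) (v k))
      = ∑ k ∈ Q, (1 : Fin m → R) k • Matrix.vecMulVec (u k) (v k) := by
    simp
  rw [this, det_expand_aux R m n u v Q 1, hT Q 1, Finset.mul_sum]
  -- the two fibers agree
  have hset : ((Fintype.piFinset (fun _ : Fin n => (Finset.univ : Finset (Fin m)))).filter
        (fun r => Function.Injective r)).filter
        (fun r => Finset.image r Finset.univ = Q)
      = (Fintype.piFinset (fun _ : Fin n => Q)).filter (fun r => Function.Injective r) := by
    ext r
    simp only [Finset.mem_filter, Fintype.mem_piFinset, Finset.mem_univ, true_and]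
    constructor
    · rintro ⟨⟨-, hinj⟩, himg⟩
      exact ⟨fun j => himg ▸ Finset.mem_image_of_mem r (Finset.mem_univ j), hinj⟩
    · rintro ⟨hmem, hinj⟩
      refine ⟨⟨fun _ => trivial, hinj⟩, ?_⟩
      apply Finset.eq_of_subset_of_card_le
      · intro x hx
        simp only [Finset.mem_image] at hx
        obtain ⟨j, -, rfl⟩ := hx
        exact hmem j
      · rw [hQ, Finset.card_image_of_injective _ hinj, Finset.card_univ, Fintype.card_fin]
  rw [hset]
  refine Finset.sum_congr rfl fun r hr => ?_
  simp only [Finset.mem_filter, Fintype.mem_piFinset] at hr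
  obtain ⟨hmem, hinj⟩ := hr
  have himg : Finset.image r Finset.univ = Q := by
    apply Finset.eq_of_subset_of_card_le
    · intro x hx
      simp only [Finset.mem_image] at hx
      obtain ⟨j, -, rfl⟩ := hx
      exact hmem j
    · rw [hQ, Finset.card_image_of_injective _ hinj, Finset.card_univ, Fintype.card_fin]
  have hc : ∏ k ∈ Q, c k = ∏ j : Fin n, c (r j) := by
    rw [← himg, Finset.prod_image (fun x _ y _ h => hinj h)]
  rw [hc]
  simp only [Pi.one_apply, one_mul]
  rw [Finset.prod_mul_distrib]
  ring
end

section
/- Let U_1,...,U_m be real matrices with U_i of size n×r_i, and let p_1,...,p_m ∈ [0,1]. Then the expectation over independent Bernoulli variables π_1,...,π_m with π_i ~ Bern(p_i) of det(Σ_{i=1}^m π_i U_i U_iᵀ) is at least det(Σ_{i=1}^m p_i U_i U_iᵀ). Concretely: Σ_{S ⊆ {1,...,m}} (Π_{i∈S} p_i)(Π_{i∉S} (1−p_i)) · det(Σ_{i∈S} U_i U_iᵀ) ≥ det(Σ_{i=1}^m p_i U_i U_iᵀ). -/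
open Matrix

private lemma psd_smul {n : ℕ} {M : Matrix (Fin n) (Fin n) ℝ} (hM : M.PosSemidef)
    {c : ℝ} (hc : 0 ≤ c) : (c • M).PosSemidef := by
  refine ⟨?_, fun x => ?_⟩
  · have h := hM.1
    unfold Matrix.IsHermitian at h ⊢
    rw [conjTranspose_smul, h, star_trivial]
  · exact (hM.smul hc).2 x

private lemma psd_sum {ι : Type*} {n : ℕ} (s : Finset ι)
    (A : ι → Matrix (Fin n) (Fin n) ℝ) (h : ∀ i, (A i).PosSemidef) :
    (∑ i ∈ s, A i).PosSemidef := by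
  induction s using Finset.cons_induction with
  | empty => simpa using Matrix.PosSemidef.zero
  | cons a s ha ih => rw [Finset.sum_cons]; exact (h a).add ih

private lemma prod_one_add_le {ι : Type*} (s : Finset ι) (lam : ι → ℝ)
    (hl : ∀ i ∈ s, 0 ≤ lam i) {p : ℝ} (hp0 : 0 ≤ p) (hp1 : p ≤ 1) :
    ∏ i ∈ s, (1 + p * lam i) ≤ (1 - p) + p * ∏ i ∈ s, (1 + lam i) := by
  induction s using Finset.cons_induction with
  | empty => simp
  | cons a s ha ih =>
    have hla : 0 ≤ lam a := hl a (Finset.mem_cons_self a s)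
    have hl' : ∀ i ∈ s, 0 ≤ lam i := fun i hi => hl i (Finset.mem_cons_of_mem hi)
    have ih' := ih hl'
    have hP : (1 : ℝ) ≤ ∏ i ∈ s, (1 + lam i) := by
      calc (1 : ℝ) = ∏ i ∈ s, 1 := by simp
        _ ≤ ∏ i ∈ s, (1 + lam i) :=
          Finset.prod_le_prod (fun i _ => zero_le_one) (fun i hi => by linarith [hl' i hi])
    have hQ : (0 : ℝ) ≤ ∏ i ∈ s, (1 + p * lam i) :=
      Finset.prod_nonneg fun i hi => by nlinarith [hl' i hi]
    rw [Finset.prod_cons, Finset.prod_cons]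
    nlinarith [mul_le_mul_of_nonneg_left ih' (by nlinarith : (0:ℝ) ≤ 1 + p * lam a),
      mul_nonneg (mul_nonneg hp0 hla) (by linarith : (0:ℝ) ≤ ∏ i ∈ s, (1 + lam i) - 1)]

private lemma det_one_add_smul {n : ℕ} {M : Matrix (Fin n) (Fin n) ℝ} (hM : M.PosSemidef)
    {p : ℝ} (hp0 : 0 ≤ p) (hp1 : p ≤ 1) :
    ((1 : Matrix (Fin n) (Fin n) ℝ) + p • M).det ≤
      (1 - p) + p * ((1 : Matrix (Fin n) (Fin n) ℝ) + M).det := by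
  have hH : M.IsHermitian := hM.1
  set U : Matrix (Fin n) (Fin n) ℝ := (hH.eigenvectorUnitary : Matrix (Fin n) (Fin n) ℝ) with hU
  have hUU : U * star U = 1 := (Matrix.mem_unitaryGroup_iff).mp (hH.eigenvectorUnitary).2
  have key : ∀ c : ℝ, ((1 : Matrix (Fin n) (Fin n) ℝ) + c • M).det =
      ∏ i, (1 + c * hH.eigenvalues i) := by
    intro c
    have hspec := hH.spectral_theorem
    have hrw : (1 : Matrix (Fin n) (Fin n) ℝ) + c • M =
        U * (diagonal (fun i => 1 + c * hH.eigenvalues i)) * star U := by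
      have hdiag : (diagonal (fun i => 1 + c * hH.eigenvalues i) : Matrix (Fin n) (Fin n) ℝ) =
          1 + c • diagonal (RCLike.ofReal ∘ hH.eigenvalues) := by
        rw [RCLike.ofReal_real_eq_id]
        rw [← Matrix.diagonal_one, ← Matrix.diagonal_smul, Matrix.diagonal_add]
        rfl
      rw [hdiag, Matrix.mul_add, Matrix.add_mul, Matrix.mul_one, hUU, mul_smul_comm,
        smul_mul_assoc]
      exact congrArg (fun X => 1 + c • X) hspec
    rw [hrw, det_mul, det_mul]
    have : U.det * (star U).det = 1 := by
      rw [← det_mul, hUU, det_one]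
    rw [mul_comm U.det _, mul_assoc, this, mul_one, det_diagonal]
  rw [key p, show (1 : Matrix (Fin n) (Fin n) ℝ) + M = 1 + (1:ℝ) • M by rw [one_smul], key 1]
  simp only [one_mul]
  exact prod_one_add_le Finset.univ _ (fun i _ => hM.eigenvalues_nonneg i) hp0 hp1

private lemma det_convex_posdef {n : ℕ} {A B : Matrix (Fin n) (Fin n) ℝ}
    (hA : A.PosDef) (hB : B.PosSemidef) {p : ℝ} (hp0 : 0 ≤ p) (hp1 : p ≤ 1) :
    (A + p • B).det ≤ (1 - p) * A.det + p * (A + B).det := by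
  obtain ⟨C, hC⟩ : ∃ C : Matrix (Fin n) (Fin n) ℝ, B = Cᴴ * C := by
    open scoped MatrixOrder in
    obtain ⟨C, hC⟩ := CStarAlgebra.nonneg_iff_eq_star_mul_self.mp hB.nonneg
    exact ⟨C, by rw [hC, star_eq_conjTranspose]⟩
  have hdet : 0 < A.det := hA.det_pos
  have hinv : A * A⁻¹ = 1 := Matrix.mul_nonsing_inv A hdet.ne'.isUnit
  have hM : (C * A⁻¹ * Cᴴ).PosSemidef :=
    Matrix.PosSemidef.mul_mul_conjTranspose_same hA.inv.posSemidef C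
  have key : ∀ c : ℝ, (A + c • B).det =
      A.det * ((1 : Matrix (Fin n) (Fin n) ℝ) + c • (C * A⁻¹ * Cᴴ)).det := by
    intro c
    have h1 : A + c • B = A * (1 + (c • (A⁻¹ * Cᴴ)) * C) := by
      rw [Matrix.mul_add, Matrix.mul_one, hC, smul_mul_assoc, mul_smul_comm,
        ← Matrix.mul_assoc, ← Matrix.mul_assoc, hinv, Matrix.one_mul]
    rw [h1, det_mul, det_one_add_mul_comm]
    have h2 : C * (c • (A⁻¹ * Cᴴ)) = c • (C * A⁻¹ * Cᴴ) := by
      rw [mul_smul_comm, Matrix.mul_assoc]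
    rw [h2]
  have h1 := det_one_add_smul hM hp0 hp1
  rw [key p, show A + B = A + (1:ℝ) • B by rw [one_smul], key 1, one_smul]
  nlinarith [mul_le_mul_of_nonneg_left h1 hdet.le]

private lemma det_convex {n : ℕ} {A B : Matrix (Fin n) (Fin n) ℝ}
    (hA : A.PosSemidef) (hB : B.PosSemidef) {p : ℝ} (hp0 : 0 ≤ p) (hp1 : p ≤ 1) :
    (A + p • B).det ≤ (1 - p) * A.det + p * (A + B).det := by
  have hPD : ∀ ε : ℝ, 0 < ε → (A + ε • (1 : Matrix (Fin n) (Fin n) ℝ)).PosDef := by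
    intro ε hε
    refine Matrix.PosDef.posSemidef_add hA ?_
    rw [Matrix.smul_one_eq_diagonal]
    exact Matrix.PosDef.diagonal (fun _ => hε)
  have H : ∀ ε ∈ Set.Ioi (0:ℝ),
      ((A + ε • 1) + p • B).det ≤ (1 - p) * (A + ε • 1).det + p * ((A + ε • 1) + B).det :=
    fun ε hε => det_convex_posdef (hPD ε hε) hB hp0 hp1
  have hc : ∀ (C : Matrix (Fin n) (Fin n) ℝ), Continuous fun ε : ℝ => ((A + ε • 1) + C).det :=
    fun C => Continuous.matrix_det
      ((continuous_const.add (continuous_id.smul continuous_const)).add continuous_const)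
  have key : ∀ (C : Matrix (Fin n) (Fin n) ℝ),
      Filter.Tendsto (fun ε : ℝ => ((A + ε • 1) + C).det) (nhdsWithin 0 (Set.Ioi 0))
        (nhds ((A + C).det)) := by
    intro C
    have := ((hc C).tendsto 0).mono_left (nhdsWithin_le_nhds (s := Set.Ioi (0:ℝ)))
    simpa using this
  have t1 := key (p • B)
  have t2 : Filter.Tendsto
      (fun ε : ℝ => (1 - p) * ((A + ε • 1) + 0).det + p * ((A + ε • 1) + B).det)
      (nhdsWithin 0 (Set.Ioi 0)) (nhds ((1 - p) * (A + 0).det + p * (A + B).det)) :=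
    (Filter.Tendsto.const_mul _ (key 0)).add (Filter.Tendsto.const_mul _ (key B))
  simp only [add_zero] at t2
  exact le_of_tendsto_of_tendsto t1 t2
    (eventually_nhdsWithin_of_forall (fun ε hε => by simpa using H ε hε))

private lemma key_ind {ι : Type*} [DecidableEq ι] {n : ℕ} (s : Finset ι)
    (A : ι → Matrix (Fin n) (Fin n) ℝ) (hA : ∀ i, (A i).PosSemidef)
    (p : ι → ℝ) (hp : ∀ i, p i ∈ Set.Icc (0:ℝ) 1)
    (C : Matrix (Fin n) (Fin n) ℝ) (hC : C.PosSemidef) :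
    (C + ∑ i ∈ s, p i • A i).det ≤
      ∑ S ∈ s.powerset, (∏ i ∈ S, p i) * (∏ i ∈ s \ S, (1 - p i)) *
        (C + ∑ i ∈ S, A i).det := by
  induction s using Finset.induction generalizing C with
  | empty => simp
  | @insert a s ha ih =>
    rw [Finset.sum_powerset_insert ha]
    have hCa : (C + p a • A a).PosSemidef := hC.add (psd_smul (hA a) (hp a).1)
    have step1 : (C + ∑ i ∈ insert a s, p i • A i).det ≤
        ∑ S ∈ s.powerset, (∏ i ∈ S, p i) * (∏ i ∈ s \ S, (1 - p i)) *
          ((C + p a • A a) + ∑ i ∈ S, A i).det := by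
      have h := ih (C + p a • A a) hCa
      rw [Finset.sum_insert ha, ← add_assoc] at *
      exact h
    refine le_trans step1 ?_
    rw [← Finset.sum_add_distrib]
    refine Finset.sum_le_sum ?_
    intro S hS
    rw [Finset.mem_powerset] at hS
    have haS : a ∉ S := fun h => ha (hS h)
    have hw : (0:ℝ) ≤ (∏ i ∈ S, p i) * (∏ i ∈ s \ S, (1 - p i)) := by
      apply mul_nonneg
      · exact Finset.prod_nonneg fun i _ => (hp i).1
      · exact Finset.prod_nonneg fun i _ => by linarith [(hp i).2]
    have hX : (C + ∑ i ∈ S, A i).PosSemidef := hC.add (psd_sum S A hA)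
    have hconv := det_convex hX (hA a) (hp a).1 (hp a).2
    have e1 : insert a s \ S = insert a (s \ S) := by
      rw [Finset.insert_sdiff_of_notMem _ haS]
    have e2 : insert a s \ insert a S = s \ S := by
      rw [Finset.insert_sdiff_insert, Finset.sdiff_insert_of_notMem ha]
    have e3 : a ∉ s \ S := fun h => ha (Finset.mem_sdiff.mp h).1
    rw [e1, e2, Finset.prod_insert e3, Finset.prod_insert haS, Finset.sum_insert haS]
    have e4 : (C + p a • A a) + ∑ i ∈ S, A i = (C + ∑ i ∈ S, A i) + p a • A a := by abel
    have e5 : C + (A a + ∑ i ∈ S, A i) = (C + ∑ i ∈ S, A i) + A a := by abel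
    rw [e4, e5]
    calc (∏ i ∈ S, p i) * (∏ i ∈ s \ S, (1 - p i)) * ((C + ∑ i ∈ S, A i) + p a • A a).det
        ≤ (∏ i ∈ S, p i) * (∏ i ∈ s \ S, (1 - p i)) *
          ((1 - p a) * (C + ∑ i ∈ S, A i).det + p a * ((C + ∑ i ∈ S, A i) + A a).det) :=
          mul_le_mul_of_nonneg_left hconv hw
      _ = (∏ i ∈ S, p i) * ((1 - p a) * ∏ i ∈ s \ S, (1 - p i)) * (C + ∑ i ∈ S, A i).det +
          p a * (∏ i ∈ S, p i) * (∏ i ∈ s \ S, (1 - p i)) *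
            ((C + ∑ i ∈ S, A i) + A a).det := by ring

/-- The expectation over independent Bernoulli variables `π i ~ Bern (p i)` of
`det (∑ i, π i • U i (U i)ᵀ)` is at least `det (∑ i, p i • U i (U i)ᵀ)`. -/
theorem expected_det_rank_r_sum_ge
    (m n : ℕ) (r : Fin m → ℕ) (U : (i : Fin m) → Matrix (Fin n) (Fin (r i)) ℝ)
    (p : Fin m → ℝ) (hp : ∀ i, p i ∈ Set.Icc (0 : ℝ) 1) :
    ∑ S ∈ Finset.univ.powerset,
        (∏ i ∈ S, p i) * (∏ i ∈ Sᶜ, (1 - p i)) *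
          (∑ i ∈ S, U i * (U i)ᵀ).det
      ≥ (∑ i : Fin m, p i • (U i * (U i)ᵀ)).det := by
  have hA : ∀ i, (U i * (U i)ᵀ).PosSemidef := by
    intro i
    have := Matrix.posSemidef_self_mul_conjTranspose (U i)
    rwa [Matrix.conjTranspose_eq_transpose_of_trivial] at this
  have h := key_ind Finset.univ (fun i => U i * (U i)ᵀ) hA p hp 0 Matrix.PosSemidef.zero
  simp only [zero_add] at h
  refine le_trans h (le_of_eq ?_)
  refine Finset.sum_congr rfl fun S _ => ?_
  rw [Finset.compl_eq_univ_sdiff]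
end

section
/- Let B be an n×M real matrix with columns b_1,...,b_M, let {E_1,...,E_k} be a partition of the column index set {1,...,M} into k blocks, and let p_1,...,p_k ∈ [0,1]. For each block b let A_b be the n×|E_b| matrix formed by the columns of B indexed by E_b. Then the expectation over independent Bernoulli variables π_1,...,π_k with π_b ~ Bern(p_b) of det(Σ_{b=1}^k π_b A_b A_bᵀ) equals Σ_{Q} (Π_{b : Q ∩ E_b ≠ ∅} p_b) · det(B_Q) · det(B_Q), where the sum ranges over all subsets Q of {1,...,M} with |Q| = n and B_Q is the n×n submatrix of B with columns indexed by Q. -/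
open Matrix

section Aux

variable {n M : ℕ}

/-- The `n × n` minor of `B` given by a column set `Q` of size `n` (junk value `0` otherwise). -/
noncomputable def subdet (B : Matrix (Fin n) (Fin M) ℝ) (Q : Finset (Fin M)) : ℝ :=
  if h : Q.card = n then
    (B.submatrix id (fun j : Fin n => (Q.orderIsoOfFin h j : Fin M))).det
  else 0

lemma image_enum (Q : Finset (Fin M)) (h : Q.card = n) (σ : Equiv.Perm (Fin n)) :
    Finset.image (fun r => (Q.orderIsoOfFin h (σ r) : Fin M)) Finset.univ = Q := by
  ext a
  simp only [Finset.mem_image, Finset.mem_univ, true_and]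
  constructor
  · rintro ⟨r, rfl⟩; exact (Q.orderIsoOfFin h (σ r)).2
  · intro ha
    exact ⟨σ.symm ((Q.orderIsoOfFin h).symm ⟨a, ha⟩), by simp⟩

lemma perm_sum_eq (B : Matrix (Fin n) (Fin M) ℝ) (Q : Finset (Fin M)) (h : Q.card = n) :
    ∑ σ : Equiv.Perm (Fin n),
        (∏ r, B r ((Q.orderIsoOfFin h (σ r) : Fin M))) *
          (B.submatrix id fun j => (Q.orderIsoOfFin h (σ j) : Fin M)).det
      = subdet B Q * subdet B Q := by
  have hsq : subdet B Q
      = (B.submatrix id fun j : Fin n => (Q.orderIsoOfFin h j : Fin M)).det := dif_pos h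
  set C : Matrix (Fin n) (Fin n) ℝ :=
    B.submatrix id fun j : Fin n => (Q.orderIsoOfFin h j : Fin M) with hC
  have h1 : ∀ σ : Equiv.Perm (Fin n),
      (B.submatrix id fun j => (Q.orderIsoOfFin h (σ j) : Fin M)) = C.submatrix id σ :=
    fun σ => rfl
  have h2 : ∀ (σ : Equiv.Perm (Fin n)) (r : Fin n),
      B r ((Q.orderIsoOfFin h (σ r) : Fin M)) = Cᵀ (σ r) r := fun _ _ => rfl
  calc ∑ σ : Equiv.Perm (Fin n),
        (∏ r, B r ((Q.orderIsoOfFin h (σ r) : Fin M))) *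
          (B.submatrix id fun j => (Q.orderIsoOfFin h (σ j) : Fin M)).det
      = ∑ σ : Equiv.Perm (Fin n),
          (((Equiv.Perm.sign σ : ℤ) : ℝ) * ∏ r, Cᵀ (σ r) r) * C.det := by
        refine Finset.sum_congr rfl fun σ _ => ?_
        rw [h1 σ, Matrix.det_permute']
        simp_rw [h2 σ]
        ring
    _ = Cᵀ.det * C.det := by rw [← Finset.sum_mul, ← Matrix.det_apply']
    _ = subdet B Q * subdet B Q := by rw [Matrix.det_transpose, hsq]

/-- Cauchy–Binet for Gram-type matrices. -/
lemma cauchy_binet (B : Matrix (Fin n) (Fin M) ℝ) (S : Finset (Fin M)) :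
    (∑ i ∈ S, Matrix.vecMulVec (fun r => B r i) (fun r => B r i)).det
      = ∑ Q ∈ S.powersetCard n, subdet B Q * subdet B Q := by
  classical
  have step1 : (∑ i ∈ S, Matrix.vecMulVec (fun r => B r i) (fun r => B r i)).det
      = ∑ f ∈ Fintype.piFinset (fun _ : Fin n => S),
          (∏ r, B r (f r)) * (B.submatrix id f).det := by
    have hG : (∑ i ∈ S, Matrix.vecMulVec (fun r => B r i) (fun r => B r i))
        = fun r => ∑ i ∈ S, B r i • (fun c => B c i) := by
      funext r c
      simp [Matrix.sum_apply, Matrix.vecMulVec_apply, Finset.sum_apply]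
    have hdet : (∑ i ∈ S, Matrix.vecMulVec (fun r => B r i) (fun r => B r i)).det
        = (Matrix.detRowAlternating (n := Fin n) (R := ℝ)).toMultilinearMap
            (fun r => ∑ i ∈ S, B r i • (fun c => B c i)) := by
      rw [hG]; rfl
    rw [hdet, MultilinearMap.map_sum_finset]
    refine Finset.sum_congr rfl fun f hf => ?_
    rw [MultilinearMap.map_smul_univ]
    have hrows : (Matrix.detRowAlternating (n := Fin n) (R := ℝ)).toMultilinearMap
        (fun r => (fun c => B c (f r))) = (B.submatrix id f).det := by
      rw [← Matrix.det_transpose]; rfl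
    rw [hrows, smul_eq_mul]
  have step2 : ∑ f ∈ Fintype.piFinset (fun _ : Fin n => S),
          (∏ r, B r (f r)) * (B.submatrix id f).det
      = ∑ f ∈ (Fintype.piFinset (fun _ : Fin n => S)).filter (fun f => Function.Injective f),
          (∏ r, B r (f r)) * (B.submatrix id f).det := by
    symm
    apply Finset.sum_subset (Finset.filter_subset _ _)
    intro f hf hnf
    have hni : ¬ Function.Injective f := fun h => hnf (Finset.mem_filter.mpr ⟨hf, h⟩)
    obtain ⟨a, b, hab, hne⟩ := Function.not_injective_iff.mp hni
    have hz : (B.submatrix id f).det = 0 :=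
      Matrix.det_zero_of_column_eq hne (fun k => by simp [Matrix.submatrix_apply, hab])
    rw [hz, mul_zero]
  have step3 : ∑ f ∈ (Fintype.piFinset (fun _ : Fin n => S)).filter (fun f => Function.Injective f),
          (∏ r, B r (f r)) * (B.submatrix id f).det
      = ∑ x ∈ ((S.powersetCard n).attach.sigma
            fun _ => (Finset.univ : Finset (Equiv.Perm (Fin n)))),
          (∏ r, B r ((x.1.1.orderIsoOfFin (Finset.mem_powersetCard.mp x.1.2).2 (x.2 r) : Fin M))) *
            (B.submatrix id fun j =>
              (x.1.1.orderIsoOfFin (Finset.mem_powersetCard.mp x.1.2).2 (x.2 j) : Fin M)).det := by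
    symm
    refine Finset.sum_bij
      (fun x _ => fun r =>
        (x.1.1.orderIsoOfFin (Finset.mem_powersetCard.mp x.1.2).2 (x.2 r) : Fin M))
      ?_ ?_ ?_ ?_
    · intro x _
      refine Finset.mem_filter.mpr ⟨Fintype.mem_piFinset.mpr fun r =>
        (Finset.mem_powersetCard.mp x.1.2).1
          (x.1.1.orderIsoOfFin (Finset.mem_powersetCard.mp x.1.2).2 (x.2 r)).2, ?_⟩
      intro r r' hrr
      exact x.2.injective
        ((x.1.1.orderIsoOfFin (Finset.mem_powersetCard.mp x.1.2).2).injective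
          (Subtype.coe_injective hrr))
    · rintro ⟨⟨Q₁, hQ₁⟩, σ₁⟩ hx₁ ⟨⟨Q₂, hQ₂⟩, σ₂⟩ hx₂ heq
      have heq' : (fun r => ((Q₁.orderIsoOfFin (Finset.mem_powersetCard.mp hQ₁).2 (σ₁ r)
            : Q₁) : Fin M))
          = (fun r => ((Q₂.orderIsoOfFin (Finset.mem_powersetCard.mp hQ₂).2 (σ₂ r)
            : Q₂) : Fin M)) := heq
      have hQ : Q₁ = Q₂ := by
        rw [← image_enum Q₁ (Finset.mem_powersetCard.mp hQ₁).2 σ₁,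
          ← image_enum Q₂ (Finset.mem_powersetCard.mp hQ₂).2 σ₂]
        rw [heq']
      subst hQ
      have hσ : σ₁ = σ₂ := by
        apply Equiv.ext
        intro r
        have hr := congrFun heq' r
        exact (Q₁.orderIsoOfFin (Finset.mem_powersetCard.mp hQ₁).2).injective
          (Subtype.coe_injective hr)
      subst hσ
      rfl
    · intro f hf
      obtain ⟨hfS, hfi⟩ := Finset.mem_filter.mp hf
      have hfS' : ∀ r, f r ∈ S := Fintype.mem_piFinset.mp hfS
      set Q : Finset (Fin M) := Finset.image f Finset.univ with hQdef
      have hcard : Q.card = n := by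
        rw [hQdef, Finset.card_image_of_injective _ hfi, Finset.card_univ, Fintype.card_fin]
      have hQmem : Q ∈ S.powersetCard n := by
        refine Finset.mem_powersetCard.mpr ⟨?_, hcard⟩
        intro a ha
        obtain ⟨r, -, rfl⟩ := Finset.mem_image.mp ha
        exact hfS' r
      set g : Fin n → Fin n := fun r =>
        (Q.orderIsoOfFin hcard).symm ⟨f r, Finset.mem_image_of_mem f (Finset.mem_univ r)⟩
        with hgdef
      have hge : ∀ r, ((Q.orderIsoOfFin hcard (g r) : Fin M)) = f r := by
        intro r
        rw [hgdef]
        exact congrArg Subtype.val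
          ((Q.orderIsoOfFin hcard).apply_symm_apply
            ⟨f r, Finset.mem_image_of_mem f (Finset.mem_univ r)⟩)
      have hg : Function.Injective g := by
        intro r r' hrr
        apply hfi
        rw [← hge r, ← hge r', hrr]
      refine ⟨⟨⟨Q, hQmem⟩, Equiv.ofBijective g (Finite.injective_iff_bijective.mp hg)⟩,
        Finset.mem_sigma.mpr ⟨Finset.mem_attach _ _, Finset.mem_univ _⟩, ?_⟩
      funext r
      exact hge r
    · intro x hx
      rfl
  rw [step1, step2, step3, Finset.sum_sigma]
  calc ∑ Q ∈ (S.powersetCard n).attach,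
        ∑ σ : Equiv.Perm (Fin n),
          (∏ r, B r ((Q.1.orderIsoOfFin (Finset.mem_powersetCard.mp Q.2).2 (σ r) : Fin M))) *
            (B.submatrix id fun j =>
              (Q.1.orderIsoOfFin (Finset.mem_powersetCard.mp Q.2).2 (σ j) : Fin M)).det
      = ∑ Q ∈ (S.powersetCard n).attach, subdet B Q.1 * subdet B Q.1 :=
        Finset.sum_congr rfl fun Q _ => perm_sum_eq B Q.1 (Finset.mem_powersetCard.mp Q.2).2
    _ = ∑ Q ∈ S.powersetCard n, subdet B Q * subdet B Q :=
        Finset.sum_attach (S.powersetCard n) (fun Q => subdet B Q * subdet B Q)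

/-- Bernoulli inclusion sum. -/
lemma bern_sum {k : ℕ} (p : Fin k → ℝ) (S : Finset (Fin k)) :
    ∑ T ∈ Finset.univ.powerset.filter (fun T => S ⊆ T),
        ((∏ b ∈ T, p b) * ∏ b ∈ Tᶜ, (1 - p b))
      = ∏ b ∈ S, p b := by
  classical
  have h1 : ∑ T ∈ Finset.univ.powerset.filter (fun T => S ⊆ T),
        ((∏ b ∈ T, p b) * ∏ b ∈ Tᶜ, (1 - p b))
      = ∑ U ∈ Sᶜ.powerset, ((∏ b ∈ S ∪ U, p b) * ∏ b ∈ (S ∪ U)ᶜ, (1 - p b)) := by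
    refine Finset.sum_bij (fun T _ => T \ S) ?_ ?_ ?_ ?_
    · intro T hT
      refine Finset.mem_powerset.mpr fun a ha => ?_
      rw [Finset.mem_sdiff] at ha
      simpa [Finset.mem_compl] using ha.2
    · intro T₁ hT₁ T₂ hT₂ heq
      have heq' : T₁ \ S = T₂ \ S := heq
      have h₁ : S ⊆ T₁ := (Finset.mem_filter.mp hT₁).2
      have h₂ : S ⊆ T₂ := (Finset.mem_filter.mp hT₂).2
      rw [← Finset.sdiff_union_of_subset h₁, ← Finset.sdiff_union_of_subset h₂, heq']
    · intro U hU
      have hUS : U ⊆ Sᶜ := Finset.mem_powerset.mp hU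
      refine ⟨S ∪ U, Finset.mem_filter.mpr ⟨Finset.mem_powerset.mpr (Finset.subset_univ _),
        Finset.subset_union_left⟩, ?_⟩
      have hd : Disjoint S U := by
        rw [Finset.disjoint_left]
        intro a haS haU
        exact absurd haS (by simpa [Finset.mem_compl] using hUS haU)
      show (S ∪ U) \ S = U
      exact Finset.union_sdiff_cancel_left hd
    · intro T hT
      have h₁ : S ⊆ T := (Finset.mem_filter.mp hT).2
      show _ = (∏ b ∈ S ∪ T \ S, p b) * ∏ b ∈ (S ∪ T \ S)ᶜ, (1 - p b)
      rw [Finset.union_sdiff_of_subset h₁]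
  rw [h1]
  have h2 : ∀ U ∈ Sᶜ.powerset,
      ((∏ b ∈ S ∪ U, p b) * ∏ b ∈ (S ∪ U)ᶜ, (1 - p b))
        = (∏ b ∈ S, p b) * ((∏ b ∈ U, p b) * ∏ b ∈ Sᶜ \ U, (1 - p b)) := by
    intro U hU
    have hUS : U ⊆ Sᶜ := Finset.mem_powerset.mp hU
    have hd : Disjoint S U := by
      rw [Finset.disjoint_left]
      intro a haS haU
      exact absurd haS (by simpa [Finset.mem_compl] using hUS haU)
    have hc : (S ∪ U)ᶜ = Sᶜ \ U := by
      ext a; simp [Finset.mem_compl, Finset.mem_sdiff]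
    rw [Finset.prod_union hd, hc, mul_assoc]
  rw [Finset.sum_congr rfl h2, ← Finset.mul_sum, ← Finset.prod_add]
  simp

end Aux

/-- Block version: the columns of `B` are partitioned into `k` blocks `E b`,
and block `b` is operational independently with probability `p b`. The
expectation of `det (∑ b, π b • A b (A b)ᵀ)` (where `A b (A b)ᵀ` is the sum of
the outer products of the columns of `B` in block `E b`) equals
`∑_{Q, |Q| = n} (∏_{b : Q ∩ E b ≠ ∅} p b) * det (B_Q) * det (B_Q)`. -/
theorem expected_det_block_rank_sum
    (n M k : ℕ) (B : Matrix (Fin n) (Fin M) ℝ)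
    (E : Fin k → Finset (Fin M))
    (hE_nonempty : ∀ b, (E b).Nonempty)
    (hE_disjoint : ∀ b b', b ≠ b' → Disjoint (E b) (E b'))
    (hE_cover : Finset.univ.biUnion E = Finset.univ)
    (p : Fin k → ℝ) (hp : ∀ b, p b ∈ Set.Icc (0 : ℝ) 1) :
    ∑ T ∈ Finset.univ.powerset,
        (∏ b ∈ T, p b) * (∏ b ∈ Tᶜ, (1 - p b)) *
          (∑ b ∈ T, ∑ i ∈ E b,
            Matrix.vecMulVec (fun r => B r i) (fun r => B r i)).det
      = ∑ Q ∈ (Finset.univ.powersetCard n (α := Fin M)).attach,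
          (∏ b ∈ Finset.univ.filter (fun b => (Q.1 ∩ E b).Nonempty), p b) *
            (B.submatrix id (fun j : Fin n =>
              (Q.1.orderIsoOfFin (Finset.mem_powersetCard_univ.mp Q.2) j : Fin M))).det *
            (B.submatrix id (fun j : Fin n =>
              (Q.1.orderIsoOfFin (Finset.mem_powersetCard_univ.mp Q.2) j : Fin M))).det := by
  classical
  have hiff : ∀ (Q : Finset (Fin M)) (T : Finset (Fin k)),
      Q ⊆ T.biUnion E ↔ Finset.univ.filter (fun b => (Q ∩ E b).Nonempty) ⊆ T := by
    intro Q T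
    constructor
    · intro hQ b hb
      rw [Finset.mem_filter] at hb
      obtain ⟨q, hq⟩ := hb.2
      rw [Finset.mem_inter] at hq
      obtain ⟨b', hb', hq'⟩ := Finset.mem_biUnion.mp (hQ hq.1)
      have hbb : b = b' := by
        by_contra hne
        exact Finset.disjoint_left.mp (hE_disjoint b b' hne) hq.2 hq'
      rw [hbb]; exact hb'
    · intro hT q hq
      have hqu : q ∈ Finset.univ.biUnion E := by rw [hE_cover]; exact Finset.mem_univ q
      obtain ⟨b, -, hqb⟩ := Finset.mem_biUnion.mp hqu
      exact Finset.mem_biUnion.mpr ⟨b, hT (Finset.mem_filter.mpr ⟨Finset.mem_univ _,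
        ⟨q, Finset.mem_inter.mpr ⟨hq, hqb⟩⟩⟩), hqb⟩
  have hfilter_eq : ∀ T : Finset (Fin k),
      (T.biUnion E).powersetCard n
        = (Finset.univ.powersetCard n (α := Fin M)).filter (fun Q => Q ⊆ T.biUnion E) := by
    intro T
    ext Q
    simp only [Finset.mem_powersetCard, Finset.mem_filter, Finset.mem_powersetCard_univ,
      Finset.subset_univ, true_and]
    tauto
  calc ∑ T ∈ Finset.univ.powerset,
        (∏ b ∈ T, p b) * (∏ b ∈ Tᶜ, (1 - p b)) *
          (∑ b ∈ T, ∑ i ∈ E b,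
            Matrix.vecMulVec (fun r => B r i) (fun r => B r i)).det
      = ∑ T ∈ Finset.univ.powerset,
          ∑ Q ∈ Finset.univ.powersetCard n (α := Fin M),
            if Q ⊆ T.biUnion E then
              (∏ b ∈ T, p b) * (∏ b ∈ Tᶜ, (1 - p b)) * (subdet B Q * subdet B Q)
            else 0 := by
        refine Finset.sum_congr rfl fun T hT => ?_
        have hd : (↑T : Set (Fin k)).PairwiseDisjoint E :=
          fun b _ b' _ hne => hE_disjoint b b' hne
        rw [← Finset.sum_biUnion hd, cauchy_binet, hfilter_eq T, Finset.sum_filter,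
          Finset.mul_sum]
        refine Finset.sum_congr rfl fun Q hQ => ?_
        by_cases h : Q ⊆ T.biUnion E <;> simp [h]
    _ = ∑ Q ∈ Finset.univ.powersetCard n (α := Fin M),
          (subdet B Q * subdet B Q) *
            ∑ T ∈ Finset.univ.powerset.filter
              (fun T => Finset.univ.filter (fun b => (Q ∩ E b).Nonempty) ⊆ T),
              ((∏ b ∈ T, p b) * ∏ b ∈ Tᶜ, (1 - p b)) := by
        rw [Finset.sum_comm]
        refine Finset.sum_congr rfl fun Q hQ => ?_
        rw [Finset.sum_filter, Finset.mul_sum]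
        refine Finset.sum_congr rfl fun T hT => ?_
        rw [if_congr (hiff Q T) rfl rfl]
        by_cases h : Finset.univ.filter (fun b => (Q ∩ E b).Nonempty) ⊆ T
        · simp only [if_pos h]; ring
        · simp only [if_neg h, mul_zero]
    _ = ∑ Q ∈ Finset.univ.powersetCard n (α := Fin M),
          (∏ b ∈ Finset.univ.filter (fun b => (Q ∩ E b).Nonempty), p b) *
            subdet B Q * subdet B Q := by
        refine Finset.sum_congr rfl fun Q hQ => ?_
        rw [bern_sum]
        ring
    _ = ∑ Q ∈ (Finset.univ.powersetCard n (α := Fin M)).attach,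
          (∏ b ∈ Finset.univ.filter (fun b => (Q.1 ∩ E b).Nonempty), p b) *
            (B.submatrix id (fun j : Fin n =>
              (Q.1.orderIsoOfFin (Finset.mem_powersetCard_univ.mp Q.2) j : Fin M))).det *
            (B.submatrix id (fun j : Fin n =>
              (Q.1.orderIsoOfFin (Finset.mem_powersetCard_univ.mp Q.2) j : Fin M))).det := by
        rw [← Finset.sum_attach (Finset.univ.powersetCard n (α := Fin M))
          (fun Q => (∏ b ∈ Finset.univ.filter (fun b => (Q ∩ E b).Nonempty), p b) *
            subdet B Q * subdet B Q)]
        refine Finset.sum_congr rfl fun Q _ => ?_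
        rw [show subdet B Q.1 = (B.submatrix id (fun j : Fin n =>
              (Q.1.orderIsoOfFin (Finset.mem_powersetCard_univ.mp Q.2) j : Fin M))).det
          from dif_pos (Finset.mem_powersetCard_univ.mp Q.2)]
end

section
/- Let u_1,...,u_m, v_1,...,v_m ∈ ℝ^n with m ≥ n, and let p ∈ [0,1]. Then the expectation over independent Bernoulli variables π_1,...,π_m each distributed as Bern(p) of det(Σ_{i=1}^m π_i u_i v_iᵀ) equals p^n · det(Σ_{i=1}^m u_i v_iᵀ). -/
open Finset

lemma det_sum_expand {m n : ℕ} (u v : Fin m → Fin n → ℝ) (S : Finset (Fin m)) :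
    (∑ i ∈ S, Matrix.vecMulVec (u i) (v i)).det
      = ∑ r ∈ Fintype.piFinset (fun _ : Fin n => S),
          (∏ a, u (r a) a) * (Matrix.of fun a b => v (r a) b).det := by
  have h1 : (∑ i ∈ S, Matrix.vecMulVec (u i) (v i))
      = Matrix.of (fun a => ∑ i ∈ S, u i a • v i) := by
    funext a b
    simp [Matrix.vecMulVec, Matrix.sum_apply, smul_eq_mul]
  rw [h1]
  have h3 : (Matrix.of (fun a => ∑ i ∈ S, u i a • v i)).det
      = ∑ r ∈ Fintype.piFinset (fun _ : Fin n => S),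
          (Matrix.detRowAlternating (R := ℝ) (n := Fin n)).toMultilinearMap
            (fun a => u (r a) a • v (r a)) :=
    (Matrix.detRowAlternating (R := ℝ) (n := Fin n)).toMultilinearMap.map_sum_finset
      (fun a i => u i a • v i) (fun _ => S)
  rw [h3]
  refine Finset.sum_congr rfl fun r _ => ?_
  rw [MultilinearMap.map_smul_univ]
  rfl



lemma sum_weight {m : ℕ} (p : ℝ) (T : Finset (Fin m)) :
    ∑ S ∈ Finset.univ.powerset.filter (fun S => T ⊆ S),
        p ^ S.card * (1 - p) ^ (m - S.card) = p ^ T.card := by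
  have hbij : ∑ S ∈ Finset.univ.powerset.filter (fun S => T ⊆ S),
        p ^ S.card * (1 - p) ^ (m - S.card)
      = ∑ R ∈ Tᶜ.powerset, p ^ (R.card + T.card) * (1 - p) ^ (m - (R.card + T.card)) := by
    refine Finset.sum_bij' (fun S _ => S \ T) (fun R _ => R ∪ T) ?_ ?_ ?_ ?_ ?_
    · intro S hS
      simp only [Finset.mem_filter, Finset.mem_powerset] at hS ⊢
      intro x hx
      simp only [Finset.mem_sdiff] at hx
      simpa using hx.2
    · intro R hR
      simp only [Finset.mem_powerset] at hR
      simp [Finset.mem_filter, Finset.subset_union_right]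
    · intro S hS
      simp only [Finset.mem_filter, Finset.mem_powerset] at hS
      exact Finset.sdiff_union_of_subset hS.2
    · intro R hR
      simp only [Finset.mem_powerset] at hR
      rw [Finset.union_sdiff_right]
      exact Finset.sdiff_eq_self_of_disjoint (Finset.disjoint_left.mpr
        fun x hx => by simpa using hR hx)
    · intro S hS
      simp only [Finset.mem_filter, Finset.mem_powerset] at hS
      rw [Finset.card_sdiff_of_subset hS.2, Nat.sub_add_cancel (Finset.card_le_card hS.2)]
  rw [hbij]
  have hcard : ∀ R ∈ Tᶜ.powerset, R.card + T.card ≤ m := by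
    intro R hR
    simp only [Finset.mem_powerset] at hR
    have := Finset.card_union_of_disjoint (s := R) (t := T)
      (Finset.disjoint_left.mpr fun x hx => by simpa using hR hx)
    calc R.card + T.card = (R ∪ T).card := this.symm
      _ ≤ m := by simpa using Finset.card_le_card (Finset.subset_univ (R ∪ T))
  have key : ∑ R ∈ Tᶜ.powerset, p ^ R.card * (1 - p) ^ (Tᶜ.card - R.card) = 1 := by
    have h := Finset.prod_add (fun _ : Fin m => p) (fun _ => 1 - p) Tᶜ
    simp only [add_sub_cancel, Finset.prod_const, one_pow] at h
    refine Eq.trans ?_ h.symm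
    exact Finset.sum_congr rfl fun R hR => by
      rw [Finset.card_sdiff_of_subset (Finset.mem_powerset.mp hR)]
  have hTc : Tᶜ.card = m - T.card := by simp [Finset.card_compl]
  calc ∑ R ∈ Tᶜ.powerset, p ^ (R.card + T.card) * (1 - p) ^ (m - (R.card + T.card))
      = p ^ T.card * ∑ R ∈ Tᶜ.powerset, p ^ R.card * (1 - p) ^ (Tᶜ.card - R.card) := by
        rw [Finset.mul_sum]
        refine Finset.sum_congr rfl fun R hR => ?_
        rw [pow_add, hTc]
        have : m - (R.card + T.card) = m - T.card - R.card := by omega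
        rw [this]; ring
    _ = p ^ T.card := by rw [key, mul_one]

/-- For identically distributed Bernoulli variables `π i ~ Bern p`, the
expectation of `det (∑ i, π i • u i (v i)ᵀ)` equals
`p ^ n * det (∑ i, u i (v i)ᵀ)`. -/
theorem expected_det_rank_one_sum_iid
    (m n : ℕ) (hmn : m ≥ n) (u v : Fin m → Fin n → ℝ)
    (p : ℝ) (hp : p ∈ Set.Icc (0 : ℝ) 1) :
    ∑ S ∈ Finset.univ.powerset,
        p ^ S.card * (1 - p) ^ (m - S.card) *
          (∑ i ∈ S, Matrix.vecMulVec (u i) (v i)).det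
      = p ^ n * (∑ i : Fin m, Matrix.vecMulVec (u i) (v i)).det := by
  classical
  set E : (Fin n → Fin m) → ℝ :=
    fun r => (∏ a, u (r a) a) * (Matrix.of fun a b => v (r a) b).det with hE
  have hpi : ∀ S : Finset (Fin m),
      Fintype.piFinset (fun _ : Fin n => S)
        = Finset.univ.filter (fun r : Fin n → Fin m => ∀ a, r a ∈ S) := by
    intro S; ext r; simp [Fintype.mem_piFinset]
  calc
    ∑ S ∈ Finset.univ.powerset, p ^ S.card * (1 - p) ^ (m - S.card) *
          (∑ i ∈ S, Matrix.vecMulVec (u i) (v i)).det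
      = ∑ S ∈ Finset.univ.powerset, ∑ r : Fin n → Fin m,
          if ∀ a, r a ∈ S then p ^ S.card * (1 - p) ^ (m - S.card) * E r else 0 := by
        refine Finset.sum_congr rfl fun S _ => ?_
        rw [det_sum_expand, Finset.mul_sum, hpi, Finset.sum_filter]
    _ = ∑ r : Fin n → Fin m, ∑ S ∈ Finset.univ.powerset,
          if ∀ a, r a ∈ S then p ^ S.card * (1 - p) ^ (m - S.card) * E r else 0 :=
        Finset.sum_comm
    _ = ∑ r : Fin n → Fin m, p ^ (Finset.univ.image r).card * E r := by
        refine Finset.sum_congr rfl fun r _ => ?_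
        rw [← Finset.sum_filter]
        have hfil : (Finset.univ.powerset.filter (fun S => ∀ a, r a ∈ S))
            = Finset.univ.powerset.filter (fun S => Finset.univ.image r ⊆ S) := by
          refine Finset.filter_congr fun S _ => ?_
          simp [Finset.image_subset_iff]
        rw [hfil, ← Finset.sum_mul, sum_weight]
    _ = ∑ r : Fin n → Fin m, p ^ n * E r := by
        refine Finset.sum_congr rfl fun r _ => ?_
        by_cases hinj : Function.Injective r
        · rw [Finset.card_image_of_injective _ hinj, Finset.card_univ, Fintype.card_fin]
        · have : E r = 0 := by
            rw [Function.not_injective_iff] at hinj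
            obtain ⟨a, b, hab, hne⟩ := hinj
            have : (Matrix.of fun a b => v (r a) b).det = 0 :=
              Matrix.det_zero_of_row_eq hne (by funext c; simp [hab])
            simp [hE, this]
          rw [this, mul_zero, mul_zero]
    _ = p ^ n * (∑ i : Fin m, Matrix.vecMulVec (u i) (v i)).det := by
        rw [← Finset.mul_sum, det_sum_expand u v Finset.univ, Fintype.piFinset_univ]
end
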